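/- Let T be a reflexive tournament on n vertices and let K be an irreflexive copy of T (an irreflexive tournament with the same vertices and non-loop arcs) appearing as a subgraph of an oriented graph G, where n ≥ 4. Then any ios-injective homomorphism f from G to T is injective on the vertices of K. -/
import Mathlib


/-- Let `T` be a reflexive tournament on at least 4 vertices and let `K` be an
irreflexive copy of `T` (embedded via `ι`) inside an oriented graph `G`.
Then any ios-injective homomorphism `f : G → T` is injective on the vertices
of `K`. -/
theorem ios_injective_on_tournament_copy {V W : Type*} [Fintype W]
    (A : V → V → Prop) (B : W → W → Prop)
    (hG_irrefl : ∀ v : V, ¬ A v v)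
    (hG_oriented : ∀ u v : V, A u v → ¬ A v u)
    (hB_refl : ∀ w : W, B w w)
    (hB_total : ∀ u v : W, B u v ∨ B v u)
    (hB_anti : ∀ u v : W, u ≠ v → ¬ (B u v ∧ B v u))
    (hcard : 4 ≤ Fintype.card W)
    (ι : W → V) (hι : Function.Injective ι)
    (hcopy : ∀ u v : W, u ≠ v → B u v → A (ι u) (ι v))
    (f : V → W)
    (hhom : ∀ u v : V, A u v → B (f u) (f v))
    (h_in : ∀ v u₁ u₂ : V, A u₁ v → A u₂ v → f u₁ = f u₂ → u₁ = u₂)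
    (h_out : ∀ v u₁ u₂ : V, A v u₁ → A v u₂ → f u₁ = f u₂ → u₁ = u₂) :
    Function.Injective (fun u : W => f (ι u)) := by
  classical
  intro x y hf
  simp only at hf
  by_contra hxy
  -- Step 1: every vertex of K has the same colour as x.
  have hAll : ∀ z : W, f (ι z) = f (ι x) := by
    intro z
    by_cases hzx : z = x
    · rw [hzx]
    by_cases hzy : z = y
    · rw [hzy, hf]
    rcases hB_total z x with h1 | h1 <;> rcases hB_total z y with h2 | h2
    · -- z → x and z → y : two out-neighbours of z with same colour
      exact absurd (hι (h_out (ι z) (ι x) (ι y) (hcopy z x hzx h1)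
        (hcopy z y hzy h2) hf)) hxy
    · -- z → x and y → z : colour forced
      have b1 : B (f (ι z)) (f (ι x)) := hhom _ _ (hcopy z x hzx h1)
      have b2 : B (f (ι x)) (f (ι z)) := by
        have := hhom _ _ (hcopy y z (Ne.symm hzy) h2)
        rwa [← hf] at this
      by_contra hne
      exact hB_anti _ _ (fun h => hne h) ⟨b1, b2⟩
    · -- x → z and z → y : colour forced
      have b1 : B (f (ι x)) (f (ι z)) := hhom _ _ (hcopy x z (Ne.symm hzx) h1)
      have b2 : B (f (ι z)) (f (ι x)) := by
        have := hhom _ _ (hcopy z y hzy h2)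
        rwa [← hf] at this
      by_contra hne
      exact hB_anti _ _ (fun h => hne h) ⟨b2, b1⟩
    · -- x → z and y → z : two in-neighbours of z with same colour
      exact absurd (hι (h_in (ι z) (ι x) (ι y) (hcopy x z (Ne.symm hzx) h1)
        (hcopy y z (Ne.symm hzy) h2) hf)) hxy
  -- Step 2: get two more vertices distinct from x and y, and from each other.
  obtain ⟨z, hz⟩ : ∃ z : W, z ∉ ({x, y} : Finset W) := by
    have h2 : ({x, y} : Finset W).card < Fintype.card W := by
      calc ({x, y} : Finset W).card ≤ 2 := Finset.card_insert_le _ _ |>.trans (by simp)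
        _ < 4 := by norm_num
        _ ≤ Fintype.card W := hcard
    by_contra h
    push_neg at h
    have : Finset.univ ⊆ ({x, y} : Finset W) := fun a _ => h a
    have := Finset.card_le_card this
    rw [Finset.card_univ] at this
    omega
  obtain ⟨w, hw⟩ : ∃ w : W, w ∉ ({x, y, z} : Finset W) := by
    have h2 : ({x, y, z} : Finset W).card < Fintype.card W := by
      calc ({x, y, z} : Finset W).card ≤ 3 := by
            apply (Finset.card_insert_le _ _).trans
            apply Nat.succ_le_succ
            exact (Finset.card_insert_le _ _).trans (by simp)
        _ < 4 := by norm_num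
        _ ≤ Fintype.card W := hcard
    by_contra h
    push_neg at h
    have : Finset.univ ⊆ ({x, y, z} : Finset W) := fun a _ => h a
    have := Finset.card_le_card this
    rw [Finset.card_univ] at this
    omega
  simp only [Finset.mem_insert, Finset.mem_singleton] at hz hw
  push_neg at hz hw
  obtain ⟨hzx, hzy⟩ := hz
  obtain ⟨hwx, hwy, hwz⟩ := hw
  -- all colours equal
  have cy : f (ι y) = f (ι x) := hf.symm
  have cz : f (ι z) = f (ι x) := hAll z
  have cw : f (ι w) = f (ι x) := hAll w
  -- Step 3: pigeonhole on arcs at x among y, z, w.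
  rcases hB_total x y with hxy' | hxy'
  · -- x → y
    have a1 : A (ι x) (ι y) := hcopy x y (fun h => hxy h) hxy'
    rcases hB_total x z with h2 | h2
    · exact absurd (hι (h_out (ι x) (ι y) (ι z) a1
        (hcopy x z (Ne.symm hzx) h2) (cy.trans cz.symm))) (Ne.symm hzy)
    · have a2 : A (ι z) (ι x) := hcopy z x hzx h2
      rcases hB_total x w with h3 | h3
      · exact absurd (hι (h_out (ι x) (ι y) (ι w) a1
          (hcopy x w (Ne.symm hwx) h3) (cy.trans cw.symm))) (Ne.symm hwy)
      · exact absurd (hι (h_in (ι x) (ι z) (ι w) a2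
          (hcopy w x hwx h3) (cz.trans cw.symm))) (Ne.symm hwz)
  · -- y → x
    have a1 : A (ι y) (ι x) := hcopy y x (fun h => hxy h.symm) hxy'
    rcases hB_total z x with h2 | h2
    · exact absurd (hι (h_in (ι x) (ι y) (ι z) a1
        (hcopy z x hzx h2) (cy.trans cz.symm))) (Ne.symm hzy)
    · have a2 : A (ι x) (ι z) := hcopy x z (Ne.symm hzx) h2
      rcases hB_total w x with h3 | h3
      · exact absurd (hι (h_in (ι x) (ι y) (ι w) a1
          (hcopy w x hwx h3) (cy.trans cw.symm))) (Ne.symm hwy)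
      · exact absurd (hι (h_out (ι x) (ι z) (ι w) a2
          (hcopy x w (Ne.symm hwx) h3) (cz.trans cw.symm))) (Ne.symm hwz)
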